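/- For every integer n ≥ 3 and every sequence x = (x_k)_{k≥0} in {0,1}^ℕ, there exists a unique real parameter c such that c ∈ 𝒦_n and, for every integer k ≥ 0: f_c^{n+3k}(c) < 0 when x_k = 0, and f_c^{n+3k}(c) > 0 when x_k = 1. -/

import Mathlib

set_option maxHeartbeats 1000000

/-- The quadratic map `f_c(x) = x² + c`. -/
def fc (c : ℝ) : ℝ → ℝ := fun x => x ^ 2 + c

/-- The set `𝒦_n` of real parameters. -/
def Kset (n : ℕ) : Set ℝ :=
  {c : ℝ | c < 0 ∧ (∀ j : ℕ, 1 ≤ j → j ≤ n - 1 → 0 < (fc c)^[j] c) ∧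
    ∀ k : ℕ, (fc c)^[n + 3 * k + 1] c < 0 ∧ 0 < (fc c)^[n + 3 * k + 2] c}

noncomputable def H (c : ℝ) (m : ℕ) : ℝ := (fc c)^[m] c
lemma H_zero (c : ℝ) : H c 0 = c := rfl
lemma H_succ (c : ℝ) (m : ℕ) : H c (m+1) = (H c m)^2 + c := by
  simp [H, Function.iterate_succ_apply', fc]
lemma H_cont (m : ℕ) : Continuous (fun c => H c m) := by
  induction m with
  | zero => simpa [H] using continuous_id'
  | succ m ih => simp only [H_succ]; exact (ih.pow 2).add continuous_id'

lemma sqlb (r b : ℝ) (hr0 : 0 ≤ r) (h : b^2 ≤ r^2) : b ≤ r := by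
  rcases le_or_gt b 0 with h0 | h0
  · linarith
  · exact le_of_pow_le_pow_left₀ (by norm_num) hr0 h

lemma escape (c : ℝ) (hc : c ≤ -2) : ∀ m, 1 ≤ m → c^2 + c ≤ H c m := by
  intro m hm
  induction m with
  | zero => omega
  | succ m ih =>
    rcases Nat.eq_or_lt_of_le hm with h1 | h2
    · rw [← h1]; simp [H_succ, H_zero]
    · have h3 := ih (by omega)
      have h4 : (2:ℝ) ≤ c^2 + c := by nlinarith
      rw [H_succ]; nlinarith [sq_nonneg (H c m - (c^2+c)), sq_nonneg (c^2+c)]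

lemma Hbounds (c : ℝ) (h1 : -2 ≤ c) (h2 : c ≤ 0) : ∀ m, c ≤ H c m ∧ H c m ≤ c^2 + c := by
  intro m
  induction m with
  | zero =>
    refine ⟨le_refl _, ?_⟩
    rw [H_zero]; nlinarith [sq_nonneg c]
  | succ m ih =>
    obtain ⟨hl, hr⟩ := ih
    constructor
    · rw [H_succ]; nlinarith [sq_nonneg (H c m)]
    · rw [H_succ]
      have : (H c m)^2 ≤ c^2 := by
        have hHc : H c m + c ≤ 0 := by nlinarith
        nlinarith [mul_nonneg (sub_nonneg.2 hl) (neg_nonneg.2 hHc)]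
      nlinarith

lemma Habs (c : ℝ) (h1 : -2 ≤ c) (h2 : c ≤ 0) (m : ℕ) : |H c m| ≤ 2 := by
  obtain ⟨hl, hr⟩ := Hbounds c h1 h2 m
  rw [abs_le]; constructor <;> nlinarith

lemma cub_small (a : ℝ) (h1 : 0 < a) (h2 : a ≤ 1.754) : a*(a-1)^2 ≤ 1 := by
  nlinarith [mul_nonneg (sub_nonneg.mpr h2) (sq_nonneg (a - 0.1226)), sq_nonneg (a-1)]

lemma cubm (a b : ℝ) (h1 : 1 ≤ a) (h : a ≤ b) : a*(a-1)^2 ≤ b*(b-1)^2 := by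
  nlinarith [sq_nonneg (a-1), sq_nonneg (b-1), mul_nonneg (sub_nonneg.mpr h) (sq_nonneg (a+b-2)), mul_nonneg (sub_nonneg.mpr h) (sq_nonneg (a-1)), mul_nonneg (sub_nonneg.mpr h) (sq_nonneg (b-1))]

lemma arange3 (a r h1 h2 h3 : ℝ) (ha0 : 0 < a) (ha2 : a ≤ 2)
    (hr0 : 0 ≤ r) (hr : r^2 = a)
    (e1 : h1 = a^2 - a) (e2 : h2 = h1^2 - a) (e3 : h3 = h2^2 - a)
    (hpos : 0 < h2) (hchain : h3^2 ≤ a - r) : 1.905 ≤ a := by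
  by_contra hcon
  push_neg at hcon
  have c1 : 1 < a*(a-1)^2 := by nlinarith
  have c2 : 1.754 ≤ a := by
    by_contra h
    push_neg at h
    have := cub_small a ha0 h.le
    linarith
  have ha1 : (1:ℝ) ≤ a := by linarith
  have eh2 : h2 = a*(a*(a-1)^2) - a := by rw [e2, e1]; ring
  rcases le_or_gt a 1.87 with hp | hp
  · have cb : a*(a-1)^2 ≤ 1.87*(1.87-1)^2 := cubm a 1.87 ha1 hp
    have hub : h2 ≤ 0.777 := by
      nlinarith [mul_nonneg (sub_nonneg.mpr hp) (sub_nonneg.mpr c1.le)]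
    have h2sq : h2^2 ≤ 0.604 := by
      nlinarith [mul_nonneg (sub_nonneg.mpr hub) (by linarith : (0:ℝ) ≤ h2 + 0.777)]
    have h3ub : h3 ≤ -1.15 := by rw [e3]; linarith
    have h3sq : 1.3 ≤ h3^2 := by
      nlinarith [mul_nonneg (by linarith : (0:ℝ) ≤ -h3-1.15) (by linarith : (0:ℝ) ≤ 1.15 - h3)]
    have hru : 1.32 ≤ r := sqlb r 1.32 hr0 (by rw [hr]; nlinarith)
    linarith
  rcases le_or_gt a 1.895 with hp2 | hp2
  · have cb : a*(a-1)^2 ≤ 1.895*(1.895-1)^2 := cubm a 1.895 ha1 hp2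
    have cblo : 1.87*(1.87-1)^2 ≤ a*(a-1)^2 := cubm 1.87 a (by norm_num) hp.le
    have hub : h2 ≤ 0.982 := by
      nlinarith [mul_nonneg (sub_nonneg.mpr hp2) (sub_nonneg.mpr c1.le)]
    have h2sq : h2^2 ≤ 0.965 := by
      nlinarith [mul_nonneg (sub_nonneg.mpr hub) (by linarith : (0:ℝ) ≤ h2 + 0.982)]
    have h3ub : h3 ≤ -0.905 := by rw [e3]; linarith
    have h3sq : 0.8 ≤ h3^2 := by
      nlinarith [mul_nonneg (by linarith : (0:ℝ) ≤ -h3-0.905) (by linarith : (0:ℝ) ≤ 0.905 - h3)]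
    have hru : 1.367 ≤ r := sqlb r 1.367 hr0 (by rw [hr]; nlinarith)
    linarith
  · have cb : a*(a-1)^2 ≤ 1.905*(1.905-1)^2 := cubm a 1.905 ha1 hcon.le
    have hub : h2 ≤ 1.0673 := by
      nlinarith [mul_nonneg (sub_nonneg.mpr hcon.le) (sub_nonneg.mpr c1.le)]
    have h2sq : h2^2 ≤ 1.13913 := by
      nlinarith [mul_nonneg (sub_nonneg.mpr hub) (by linarith : (0:ℝ) ≤ h2 + 1.0673)]
    have h3ub : h3 ≤ 1.13913 - a := by rw [e3]; linarith
    have h3sq : (a - 1.13913)^2 ≤ h3^2 := by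
      nlinarith [mul_nonneg (by linarith : (0:ℝ) ≤ -h3 + 1.13913 - a) (by linarith : (0:ℝ) ≤ -h3 + a - 1.13913)]
    have hru : 1.37659 ≤ r := sqlb r 1.37659 hr0 (by rw [hr]; nlinarith)
    nlinarith [sq_nonneg (a - 1.895)]

lemma arange4 (a h1 h2 h3 : ℝ) (ha0 : 0 < a) (ha2 : a ≤ 2)
    (e1 : h1 = a^2 - a) (e2 : h2 = h1^2 - a) (e3 : h3 = h2^2 - a)
    (hpos : 0 < h2) (hpos3 : 0 < h3) : 1.905 ≤ a := by
  by_contra hcon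
  push_neg at hcon
  have c1 : 1 < a*(a-1)^2 := by nlinarith
  have c2 : 1.754 ≤ a := by
    by_contra h
    push_neg at h
    nlinarith [mul_nonneg (sub_nonneg.mpr h.le) (sq_nonneg (a - 0.1226)), sq_nonneg (a-1)]
  have ha1 : (1:ℝ) ≤ a := by linarith
  have cb : a*(a-1)^2 ≤ 1.905*(1.905-1)^2 := by
    nlinarith [sq_nonneg (a-1), mul_nonneg (sub_nonneg.mpr hcon.le) (sq_nonneg (a+1.905-2)), mul_nonneg (sub_nonneg.mpr hcon.le) (sq_nonneg (a-1))]
  have hub : h2 ≤ 1.0673 := by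
    nlinarith [mul_nonneg (sub_nonneg.mpr hcon.le) (sub_nonneg.mpr c1.le)]
  have h2sq : h2^2 ≤ 1.13913 := by
    nlinarith [mul_nonneg (sub_nonneg.mpr hub) (by linarith : (0:ℝ) ≤ h2 + 1.0673)]
  nlinarith

lemma key1 (a r s u v w : ℝ) (ha1 : 1.905 ≤ a) (ha2 : a ≤ 2)
    (hr0 : 0 ≤ r) (hr : r^2 = a) (hs0 : 0 ≤ s) (hs : s^2 = a - r)
    (hu : 0 < u) (huu : u^2 ≤ a + s) (hv : v < 0) (hvv : v^2 = u + a)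
    (hw : w^2 = v + a) : 0.027 ≤ w^2 := by
  have hr1 : 1.3802 ≤ r := sqlb r 1.3802 hr0 (by rw [hr]; norm_num; linarith)
  have hr2 : r ≤ 1.41422 := sqlb 1.41422 r (by norm_num) (by rw [hr]; nlinarith)
  have chord : 0.357*a + 0.700115 ≤ r := by
    nlinarith [mul_nonneg (sub_nonneg.mpr hr1) (sub_nonneg.mpr hr2)]
  obtain ⟨B, hB⟩ : ∃ B:ℝ, B = (a - 0.027)^2 - a := ⟨_, rfl⟩
  have hB0 : 0 ≤ B := by rw [hB]; nlinarith
  have hBlb : 1.62 ≤ B := by rw [hB]; nlinarith [sq_nonneg (a - 1.905)]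
  have hBsq : 1.62*1.62 ≤ B*B := mul_le_mul hBlb hBlb (by norm_num) (by linarith)
  have hBa : 0 ≤ B^2 - a := by nlinarith [hBsq]
  have poly : a - r ≤ (B^2 - a)^2 := by
    rw [hB]
    nlinarith [sq_nonneg (a - 1.905), sq_nonneg (a-2), mul_nonneg (sub_nonneg.mpr ha1) (sub_nonneg.mpr ha2), sq_nonneg ((a-0.027)^2 - a - 1.6)]
  have hsB : s ≤ B^2 - a := sqlb (B^2 - a) s hBa (by rw [hs]; nlinarith [sq_nonneg (B^2-a)])
  have huB : u ≤ B := sqlb B u hB0 (by nlinarith)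
  have hvsq : (-v)^2 ≤ (a - 0.027)^2 := by
    have hnv : (-v)^2 = v^2 := by ring
    rw [hnv, hvv]; rw [hB] at huB; linarith
  have hvB : -v ≤ a - 0.027 := sqlb (a - 0.027) (-v) (by linarith) hvsq
  linarith [hw, hvB]

lemma ulow (a r s u : ℝ) (ha1 : 1.905 ≤ a) (ha2 : a ≤ 2)
    (hr0 : 0 ≤ r) (hr : r^2 = a) (hs0 : 0 ≤ s) (hs : s^2 = a - r)
    (hu : 0 < u) (huu : a - s ≤ u^2) : 1.086 ≤ u := by
  have hr1 : 1.3802 ≤ r := sqlb r 1.3802 hr0 (by rw [hr]; norm_num; linarith)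
  have hr2 : r ≤ 1.41422 := sqlb 1.41422 r (by norm_num) (by rw [hr]; nlinarith)
  have chord : 0.357*a + 0.700115 ≤ r := by
    nlinarith [mul_nonneg (sub_nonneg.mpr hr1) (sub_nonneg.mpr hr2)]
  have h1 : s ≤ a - 1.18 := by
    refine sqlb (a - 1.18) s (by linarith) ?_
    rw [hs]
    nlinarith [mul_nonneg (by linarith : (0:ℝ) ≤ a - 1.905) (by linarith : (0:ℝ) ≤ a - 1.098)]
  refine sqlb u 1.086 hu.le ?_
  nlinarith

lemma ubounds (a r s u v w' : ℝ) (ha1 : 1.905 ≤ a) (ha2 : a ≤ 2)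
    (hr0 : 0 ≤ r) (hr : r^2 = a) (hs0 : 0 ≤ s) (hs : s^2 = a - r)
    (hu : 0 < u) (huu : u^2 ≤ a + s) (hv : v < 0) (hvv : v^2 = u + a)
    (hw : w'^2 ≤ a - r) :
    u ≤ 1.6696 ∧ -1.9157 ≤ v ∧ w'^2 ≤ 0.6198 := by
  have hr1 : 1.3802 ≤ r := sqlb r 1.3802 hr0 (by rw [hr]; norm_num; linarith)
  have hsu : s ≤ 0.7873 := sqlb 0.7873 s (by norm_num) (by rw [hs]; nlinarith)
  have hu1 : u ≤ 1.6696 := sqlb 1.6696 u (by norm_num) (by nlinarith)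
  have hv1 : -v ≤ 1.9157 := sqlb 1.9157 (-v) (by norm_num) (by nlinarith [sq_nonneg v])
  exact ⟨hu1, by linarith, by linarith⟩

/-- All structural facts about a member of `Kset n`. -/
lemma Kset_facts (n : ℕ) (hn : 3 ≤ n) (c : ℝ) (hK : c ∈ Kset n) :
    1.905 ≤ -c ∧ -c ≤ 2 ∧
    (∀ j, 1 ≤ j → j ≤ n-2 → 1.3802 ≤ H c j) ∧
    (1.086 ≤ H c (n-1)) ∧
    (∀ k, (H c (n+3*k))^2 ≤ 0.6198 ∧ 0.027 ≤ (H c (n+3*k))^2 ∧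
          H c (n+3*k+1) ≤ -1.3802 ∧ -1.9157 ≤ H c (n+3*k+1) ∧
          1.086 ≤ H c (n+3*k+2) ∧ H c (n+3*k+2) ≤ 1.6696) := by
  obtain ⟨hc0, hpos, htail⟩ := hK
  have hpos' : ∀ j : ℕ, 1 ≤ j → j ≤ n - 1 → 0 < H c j := hpos
  have htail' : ∀ k : ℕ, H c (n + 3*k + 1) < 0 ∧ 0 < H c (n + 3*k + 2) := htail
  -- c > -2
  have hc2 : -2 ≤ c := by
    by_contra h
    push_neg at h
    have h1 := escape c (by linarith) (n + 1) (by omega)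
    have h2 : H c (n + 3*0 + 1) < 0 := (htail' 0).1
    simp only [Nat.mul_zero, Nat.add_zero] at h2
    nlinarith
  set a := -c with ha
  have ha0 : 0 < a := by simp [ha]; linarith
  have ha2 : a ≤ 2 := by simp [ha]; linarith
  set r := Real.sqrt a with hrdef
  have hr0 : 0 ≤ r := Real.sqrt_nonneg a
  have hr : r^2 = a := Real.sq_sqrt ha0.le
  -- D2 : small positions squared ≤ a - r
  have D2 : ∀ k, (H c (n+3*k))^2 ≤ a - r := by
    intro k
    have hv := (htail' k).1
    have hu := (htail' k).2
    have ev : H c (n+3*k+1) = (H c (n+3*k))^2 + c := H_succ c _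
    have eu : H c (n+3*k+2) = (H c (n+3*k+1))^2 + c := H_succ c _
    have hv2 : r ≤ -(H c (n+3*k+1)) := by
      refine sqlb (-(H c (n+3*k+1))) r (by linarith) ?_
      have : (-(H c (n+3*k+1)))^2 = (H c (n+3*k+1))^2 := by ring
      rw [this, hr]; nlinarith
    nlinarith
  -- a-range lower bound
  have e1 : H c 1 = a^2 - a := by rw [H_succ, H_zero, ha]; ring
  have e2 : H c 2 = (H c 1)^2 - a := by rw [show (2:ℕ) = 1+1 from rfl, H_succ, ha]; ring
  have h2pos : 0 < H c 2 := hpos' 2 (by omega) (by omega)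
  have ha1 : 1.905 ≤ a := by
    rcases Nat.eq_or_lt_of_le hn with h3 | h4
    · -- n = 3
      have e3 : H c 3 = (H c 2)^2 - a := by rw [show (3:ℕ) = 2+1 from rfl, H_succ, ha]; ring
      have hch : (H c 3)^2 ≤ a - r := by
        have h0 := D2 0
        rw [← h3] at h0
        simpa using h0
      exact arange3 a r (H c 1) (H c 2) (H c 3) ha0 ha2 hr0 hr e1 e2 e3 h2pos hch
    · -- n ≥ 4
      have e3 : H c 3 = (H c 2)^2 - a := by rw [show (3:ℕ) = 2+1 from rfl, H_succ, ha]; ring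
      have h3pos : 0 < H c 3 := hpos' 3 (by omega) (by omega)
      exact arange4 a (H c 1) (H c 2) (H c 3) ha0 ha2 e1 e2 e3 h2pos h3pos
  -- now s
  have har : 0 ≤ a - r := le_trans (sq_nonneg _) (D2 0)
  set s := Real.sqrt (a - r) with hsdef
  have hs0 : 0 ≤ s := Real.sqrt_nonneg _
  have hs : s^2 = a - r := Real.sq_sqrt har
  -- block facts
  have blocks : ∀ k, (H c (n+3*k))^2 ≤ 0.6198 ∧ 0.027 ≤ (H c (n+3*k))^2 ∧
      H c (n+3*k+1) ≤ -1.3802 ∧ -1.9157 ≤ H c (n+3*k+1) ∧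
      1.086 ≤ H c (n+3*k+2) ∧ H c (n+3*k+2) ≤ 1.6696 := by
    intro k
    have hv := (htail' k).1
    have hu := (htail' k).2
    have ev : H c (n+3*k+1) = (H c (n+3*k))^2 + c := H_succ c _
    have eu : H c (n+3*k+2) = (H c (n+3*k+1))^2 + c := H_succ c _
    have ew' : H c (n+3*(k+1)) = (H c (n+3*k+2))^2 + c := by
      rw [show n+3*(k+1) = (n+3*k+2)+1 from by ring, H_succ]
    have hw'2 : (H c (n+3*(k+1)))^2 ≤ a - r := D2 (k+1)
    have hw'abs : -s ≤ H c (n+3*(k+1)) ∧ H c (n+3*(k+1)) ≤ s := by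
      constructor
      · have := sqlb s (-(H c (n+3*(k+1)))) hs0 (by rw [hs]; nlinarith [hw'2])
        linarith
      · exact sqlb s (H c (n+3*(k+1))) hs0 (by rw [hs]; nlinarith [hw'2])
    have huu : (H c (n+3*k+2))^2 ≤ a + s := by nlinarith [hw'abs.2]
    have huu' : a - s ≤ (H c (n+3*k+2))^2 := by nlinarith [hw'abs.1]
    have hvv : (H c (n+3*k+1))^2 = H c (n+3*k+2) + a := by rw [eu, ha]; ring
    have hww : (H c (n+3*k))^2 = H c (n+3*k+1) + a := by rw [ev, ha]; ring
    have hkey := key1 a r s (H c (n+3*k+2)) (H c (n+3*k+1)) (H c (n+3*k)) ha1 ha2 hr0 hr hs0 hs hu huu hv hvv hww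
    have hul := ulow a r s (H c (n+3*k+2)) ha1 ha2 hr0 hr hs0 hs hu huu'
    obtain ⟨hu1, hv1, hw1⟩ := ubounds a r s (H c (n+3*k+2)) (H c (n+3*k+1)) (H c (n+3*k)) ha1 ha2 hr0 hr hs0 hs hu huu hv hvv (D2 k)
    have hr1 : 1.3802 ≤ r := sqlb r 1.3802 hr0 (by rw [hr]; norm_num; linarith)
    have hvle : H c (n+3*k+1) ≤ -1.3802 := by
      have hv2 : r ≤ -(H c (n+3*k+1)) := by
        refine sqlb (-(H c (n+3*k+1))) r (by linarith) ?_
        have h9 : (-(H c (n+3*k+1)))^2 = (H c (n+3*k+1))^2 := by ring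
        rw [h9, hr]; nlinarith
      linarith
    exact ⟨hw1, hkey, hvle, hv1, hul, hu1⟩
  -- stretch
  have hstr : ∀ j, 1 ≤ j → j ≤ n-2 → 1.3802 ≤ H c j := by
    intro j hj1 hj2
    have hjpos : 0 < H c j := hpos' j hj1 (by omega)
    have hj1pos : 0 < H c (j+1) := hpos' (j+1) (by omega) (by omega)
    have e : H c (j+1) = (H c j)^2 + c := H_succ c j
    have hr1 : 1.3802 ≤ r := sqlb r 1.3802 hr0 (by rw [hr]; norm_num; linarith)
    have : r ≤ H c j := sqlb (H c j) r hjpos.le (by rw [hr]; nlinarith)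
    linarith
  have hn1 : 1.086 ≤ H c (n-1) := by
    have hjpos : 0 < H c (n-1) := hpos' (n-1) (by omega) (by omega)
    have e : H c n = (H c (n-1))^2 + c := by
      have e' := H_succ c (n-1)
      rw [show (n-1)+1 = n from by omega] at e'
      exact e'
    have hw0 : (H c (n+3*0))^2 ≤ a - r := D2 0
    simp only [Nat.mul_zero, Nat.add_zero] at hw0
    have hw0' : -s ≤ H c n := by
      have := sqlb s (-(H c n)) hs0 (by rw [hs]; nlinarith [hw0])
      linarith
    have huu' : a - s ≤ (H c (n-1))^2 := by nlinarith
    exact ulow a r s (H c (n-1)) ha1 ha2 hr0 hr hs0 hs hjpos huu'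
  rw [ha] at ha1 ha2
  exact ⟨ha1, ha2, hstr, hn1, blocks⟩

lemma absstep2 (S D1 D2 A Δ b ρ α : ℝ) (h : D2 = S*D1 + A*Δ) (hS : b ≤ |S|)
    (hD : ρ ≤ |D1|) (hA : |A| ≤ α) (hΔ : 0 ≤ Δ) (hb : 0 ≤ b) (hρ : 0 ≤ ρ) :
    b*ρ - α*Δ ≤ |D2| := by
  have t1 : |S*D1| ≤ |D2| + |A*Δ| := by
    have e : S*D1 = D2 - A*Δ := by rw [h]; ring
    rw [e]; exact abs_sub _ _
  have t2 : |A*Δ| ≤ α*Δ := by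
    rw [abs_mul, abs_of_nonneg hΔ]
    exact mul_le_mul_of_nonneg_right hA hΔ
  have t3 : b*ρ ≤ |S| * |D1| := mul_le_mul hS hD hρ (abs_nonneg _)
  rw [← abs_mul] at t3
  linarith

section uniq
variable (n : ℕ) (x : ℕ → Fin 2) (c1 c2 : ℝ)

lemma Kset_uniq_aux (hn : 3 ≤ n)
    (F1 : 1.905 ≤ -c1 ∧ -c1 ≤ 2 ∧
      (∀ j, 1 ≤ j → j ≤ n-2 → 1.3802 ≤ H c1 j) ∧ (1.086 ≤ H c1 (n-1)) ∧
      (∀ k, (H c1 (n+3*k))^2 ≤ 0.6198 ∧ 0.027 ≤ (H c1 (n+3*k))^2 ∧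
        H c1 (n+3*k+1) ≤ -1.3802 ∧ -1.9157 ≤ H c1 (n+3*k+1) ∧
        1.086 ≤ H c1 (n+3*k+2) ∧ H c1 (n+3*k+2) ≤ 1.6696))
    (F2 : 1.905 ≤ -c2 ∧ -c2 ≤ 2 ∧
      (∀ j, 1 ≤ j → j ≤ n-2 → 1.3802 ≤ H c2 j) ∧ (1.086 ≤ H c2 (n-1)) ∧
      (∀ k, (H c2 (n+3*k))^2 ≤ 0.6198 ∧ 0.027 ≤ (H c2 (n+3*k))^2 ∧
        H c2 (n+3*k+1) ≤ -1.3802 ∧ -1.9157 ≤ H c2 (n+3*k+1) ∧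
        1.086 ≤ H c2 (n+3*k+2) ∧ H c2 (n+3*k+2) ≤ 1.6696))
    (hx1 : ∀ k, (x k = 0 → H c1 (n+3*k) < 0) ∧ (x k = 1 → 0 < H c1 (n+3*k)))
    (hx2 : ∀ k, (x k = 0 → H c2 (n+3*k) < 0) ∧ (x k = 1 → 0 < H c2 (n+3*k)))
    (hle : c1 ≤ c2) : c1 = c2 := by
  obtain ⟨ha1, ha2, hstr1, hpen1, hblk1⟩ := F1
  obtain ⟨hb1, hb2, hstr2, hpen2, hblk2⟩ := F2
  by_contra hne
  have hΔ : 0 < c2 - c1 := sub_pos.mpr (lt_of_le_of_ne hle hne)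
  set Δ := c2 - c1 with hΔdef
  have Drec : ∀ m, H c2 (m+1) - H c1 (m+1) = (H c2 m + H c1 m) * (H c2 m - H c1 m) + Δ := by
    intro m; rw [H_succ, H_succ, hΔdef]; ring
  have Dbd : ∀ m, |H c2 m - H c1 m| ≤ 4 := by
    intro m
    have b1 := Habs c1 (by linarith) (by linarith) m
    have b2 := Habs c2 (by linarith) (by linarith) m
    rw [abs_le] at b1 b2 ⊢
    exact ⟨by linarith [b1.1, b1.2, b2.1, b2.2], by linarith [b1.1, b1.2, b2.1, b2.2]⟩
  have hD1 : 2.81*Δ ≤ |H c2 1 - H c1 1| := by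
    have e : H c2 1 - H c1 1 = (c1 + c2 + 1) * Δ := by
      rw [show (1:ℕ) = 0+1 from rfl, H_succ, H_succ, H_zero, H_zero, hΔdef]; ring
    rw [e, abs_mul, abs_of_nonneg hΔ.le, abs_of_neg (by linarith : c1 + c2 + 1 < 0)]
    nlinarith
  have hH1 : 1.724 ≤ H c1 1 ∧ 1.724 ≤ H c2 1 := by
    constructor
    · have e : H c1 1 = c1^2 + c1 := by
        rw [show (1:ℕ) = 0+1 from rfl, H_succ, H_zero]
      rw [e]; nlinarith
    · have e : H c2 1 = c2^2 + c2 := by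
        rw [show (1:ℕ) = 0+1 from rfl, H_succ, H_zero]
      rw [e]; nlinarith
  have hD2 : 8.688*Δ ≤ |H c2 2 - H c1 2| := by
    have h := absstep2 (H c2 1 + H c1 1) (H c2 1 - H c1 1) (H c2 2 - H c1 2) 1 Δ
      3.448 (2.81*Δ) 1 (by rw [show (2:ℕ) = 1+1 from rfl, Drec 1]; ring)
      (by rw [abs_of_nonneg (by linarith [hH1.1, hH1.2] : (0:ℝ) ≤ H c2 1 + H c1 1)]; linarith [hH1.1, hH1.2])
      hD1 (by simp) hΔ.le (by norm_num) (by positivity)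
    nlinarith
  have ent : ∀ m, 2 ≤ m → m ≤ n-1 → 8.688*Δ ≤ |H c2 m - H c1 m| := by
    intro m hm2
    induction m, hm2 using Nat.le_induction with
    | base => intro _; exact hD2
    | succ m hm ih =>
      intro hmn
      have hstr : 1.3802 ≤ H c1 m ∧ 1.3802 ≤ H c2 m :=
        ⟨hstr1 m (by omega) (by omega), hstr2 m (by omega) (by omega)⟩
      have h := absstep2 (H c2 m + H c1 m) (H c2 m - H c1 m) (H c2 (m+1) - H c1 (m+1)) 1 Δ
        2.7604 (8.688*Δ) 1 (by rw [Drec m]; ring)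
        (by rw [abs_of_nonneg (by linarith [hstr.1, hstr.2] : (0:ℝ) ≤ H c2 m + H c1 m)]; linarith [hstr.1, hstr.2])
        (ih (by omega)) (by simp) hΔ.le (by norm_num) (by positivity)
      nlinarith
  have hDn : 17*Δ ≤ |H c2 n - H c1 n| := by
    have e1 : H c2 n - H c1 n = (H c2 (n-1) + H c1 (n-1)) * (H c2 (n-1) - H c1 (n-1)) + 1*Δ := by
      have e0 := Drec (n-1)
      rw [show (n-1)+1 = n from by omega] at e0
      rw [e0]; ring
    have h := absstep2 _ _ _ 1 Δ 2.172 (8.688*Δ) 1 e1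
      (by rw [abs_of_nonneg (by linarith [hpen1, hpen2] : (0:ℝ) ≤ H c2 (n-1) + H c1 (n-1))]; linarith [hpen1, hpen2])
      (ent (n-1) (by omega) (by omega)) (by simp) hΔ.le (by norm_num) (by positivity)
    nlinarith
  have blk : ∀ k : ℕ, ((17:ℝ) + 3*(k:ℝ))*Δ ≤ |H c2 (n+3*k) - H c1 (n+3*k)| := by
    intro k
    induction k with
    | zero => simpa using hDn
    | succ k ih =>
      obtain ⟨w1u, w1l, v1a, v1b, u1a, u1b⟩ := hblk1 k
      obtain ⟨w2u, w2l, v2a, v2b, u2a, u2b⟩ := hblk2 k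
      -- sign-coherent lower bound on |Sw|
      have hSw : 0.3286 ≤ |H c2 (n+3*k) + H c1 (n+3*k)| := by
        have hcase : x k = 0 ∨ x k = 1 := by omega
        rcases hcase with hx | hx
        · have l1 := (hx1 k).1 hx
          have l2 := (hx2 k).1 hx
          have m1 : 0.1643 ≤ -(H c1 (n+3*k)) := by
            refine sqlb _ _ (by linarith) ?_
            have : (-(H c1 (n+3*k)))^2 = (H c1 (n+3*k))^2 := by ring
            rw [this]; linarith [w1l]
          have m2 : 0.1643 ≤ -(H c2 (n+3*k)) := by
            refine sqlb _ _ (by linarith) ?_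
            have : (-(H c2 (n+3*k)))^2 = (H c2 (n+3*k))^2 := by ring
            rw [this]; linarith [w2l]
          rw [abs_of_neg (by linarith)]
          linarith
        · have l1 := (hx1 k).2 hx
          have l2 := (hx2 k).2 hx
          have m1 : 0.1643 ≤ H c1 (n+3*k) := by
            refine sqlb _ _ l1.le ?_; linarith [w1l]
          have m2 : 0.1643 ≤ H c2 (n+3*k) := by
            refine sqlb _ _ l2.le ?_; linarith [w2l]
          rw [abs_of_pos (by linarith)]
          linarith
      have hSv : 2.7604 ≤ |H c2 (n+3*k+1) + H c1 (n+3*k+1)| ∧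
          |H c2 (n+3*k+1) + H c1 (n+3*k+1)| ≤ 3.8314 := by
        rw [abs_of_neg (by linarith)]
        exact ⟨by linarith, by linarith⟩
      have hSu : 2.172 ≤ |H c2 (n+3*k+2) + H c1 (n+3*k+2)| ∧
          |H c2 (n+3*k+2) + H c1 (n+3*k+2)| ≤ 3.3392 := by
        rw [abs_of_pos (by linarith)]
        exact ⟨by linarith, by linarith⟩
      -- three-step expansion
      have e3 : H c2 (n+3*(k+1)) - H c1 (n+3*(k+1)) =
          ((H c2 (n+3*k+2) + H c1 (n+3*k+2)) * (H c2 (n+3*k+1) + H c1 (n+3*k+1)) * (H c2 (n+3*k) + H c1 (n+3*k))) * (H c2 (n+3*k) - H c1 (n+3*k)) +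
          ((H c2 (n+3*k+2) + H c1 (n+3*k+2)) * (H c2 (n+3*k+1) + H c1 (n+3*k+1)) + (H c2 (n+3*k+2) + H c1 (n+3*k+2)) + 1) * Δ := by
        have d1 := Drec (n+3*k)
        have d2 := Drec (n+3*k+1)
        have d3 := Drec (n+3*k+2)
        rw [show n+3*(k+1) = (n+3*k+2)+1 from by ring, d3, d2, d1]; ring
      have hP : 1.97 ≤ |(H c2 (n+3*k+2) + H c1 (n+3*k+2)) * (H c2 (n+3*k+1) + H c1 (n+3*k+1)) * (H c2 (n+3*k) + H c1 (n+3*k))| := by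
        rw [abs_mul, abs_mul]
        have p1 : 2.172 * 2.7604 ≤ |H c2 (n+3*k+2) + H c1 (n+3*k+2)| * |H c2 (n+3*k+1) + H c1 (n+3*k+1)| :=
          mul_le_mul hSu.1 hSv.1 (by norm_num) (abs_nonneg _)
        have p2 : (2.172 * 2.7604) * 0.3286 ≤ (|H c2 (n+3*k+2) + H c1 (n+3*k+2)| * |H c2 (n+3*k+1) + H c1 (n+3*k+1)|) * |H c2 (n+3*k) + H c1 (n+3*k)| :=
          mul_le_mul p1 hSw (by norm_num) (by positivity)
        linarith [p2]
      have hA : |(H c2 (n+3*k+2) + H c1 (n+3*k+2)) * (H c2 (n+3*k+1) + H c1 (n+3*k+1)) + (H c2 (n+3*k+2) + H c1 (n+3*k+2)) + 1| ≤ 8.455 := by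
        have q1 : H c2 (n+3*k+2) + H c1 (n+3*k+2) ≤ 3.3392 := by linarith
        have q2 : 2.172 ≤ H c2 (n+3*k+2) + H c1 (n+3*k+2) := by linarith
        have q3 : H c2 (n+3*k+1) + H c1 (n+3*k+1) + 1 ≤ -1.7604 := by linarith
        have q4 : -2.8314 ≤ H c2 (n+3*k+1) + H c1 (n+3*k+1) + 1 := by linarith
        rw [abs_le]
        constructor
        · nlinarith [mul_nonneg (by linarith : (0:ℝ) ≤ 3.3392 - (H c2 (n+3*k+2) + H c1 (n+3*k+2))) (by linarith : (0:ℝ) ≤ (H c2 (n+3*k+1) + H c1 (n+3*k+1) + 1) + 2.8314)]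
        · nlinarith [mul_nonneg (by linarith : (0:ℝ) ≤ H c2 (n+3*k+2) + H c1 (n+3*k+2) - 2.172) (by linarith : (0:ℝ) ≤ -(H c2 (n+3*k+1) + H c1 (n+3*k+1) + 1) - 1.7604)]
      have h := absstep2 _ _ _ _ Δ 1.97 (((17:ℝ) + 3*(k:ℝ))*Δ) 8.455 e3 hP ih hA hΔ.le (by norm_num) (by positivity)
      have hcast : ((k:ℕ)+1 : ℝ) = (k:ℝ) + 1 := by push_cast; ring
      calc ((17:ℝ) + 3*((k+1 : ℕ):ℝ))*Δ = ((17:ℝ) + 3*((k:ℝ)+1))*Δ := by push_cast; ring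
      _ ≤ 1.97*(((17:ℝ) + 3*(k:ℝ))*Δ) - 8.455*Δ := by
          nlinarith [mul_nonneg (Nat.cast_nonneg (α := ℝ) k) hΔ.le, hΔ.le]
      _ ≤ |H c2 (n+3*(k+1)) - H c1 (n+3*(k+1))| := h
  obtain ⟨K, hK⟩ := exists_nat_gt (4/Δ)
  have hKl := blk K
  have hb := Dbd (n+3*K)
  have : 4 < (K:ℝ)*Δ := by
    rw [div_lt_iff₀ hΔ] at hK
    linarith
  linarith [hKl, hb, hΔ.le]
end uniq

lemma trim (φ : ℝ → ℝ) (hφ : Continuous φ) {p q A B : ℝ} (hpq : p ≤ q) (hAB : A < B)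
    (hp : B ≤ φ p) (hq : φ q ≤ A) :
    ∃ p' q', p ≤ p' ∧ p' < q' ∧ q' ≤ q ∧ φ p' = B ∧ φ q' = A ∧
      ∀ c ∈ Set.Icc p' q', A ≤ φ c ∧ φ c ≤ B := by
  have hconA : ∃ c0 ∈ Set.Icc p q, φ c0 = A := by
    have h1 : A ∈ Set.Icc (φ q) (φ p) := ⟨hq, by linarith⟩
    have h2 := intermediate_value_Icc' hpq hφ.continuousOn h1
    obtain ⟨c0, hc0, hc0A⟩ := h2
    exact ⟨c0, hc0, hc0A⟩
  set S := {c | c ∈ Set.Icc p q ∧ φ c = A} with hSdef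
  have hSne : S.Nonempty := by
    obtain ⟨c0, hc0, hc0A⟩ := hconA
    exact ⟨c0, hc0, hc0A⟩
  have hSclosed : IsClosed S := by
    have : S = Set.Icc p q ∩ φ ⁻¹' {A} := by
      ext c; simp [hSdef, Set.mem_inter_iff]
    rw [this]
    exact isClosed_Icc.inter (isClosed_singleton.preimage hφ)
  have hSbdd : BddBelow S := (bddBelow_Icc : BddBelow (Set.Icc p q)).mono (fun c hc => hc.1)
  set q' := sInf S with hq'def
  have hq'S : q' ∈ S := hSclosed.csInf_mem hSne hSbdd
  have hq'Icc : q' ∈ Set.Icc p q := hq'S.1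
  have hq'A : φ q' = A := hq'S.2
  have zq : ∀ c, p ≤ c → c < q' → A < φ c := by
    intro c hc1 hc2
    by_contra hcon
    push_neg at hcon
    have h1 : A ∈ Set.Icc (φ c) (φ p) := ⟨hcon, by linarith⟩
    obtain ⟨c1, hc1m, hc1A⟩ := intermediate_value_Icc' hc1 hφ.continuousOn h1
    have hc1S : c1 ∈ S := ⟨⟨hc1m.1, by linarith [hc1m.2, hq'Icc.2]⟩, hc1A⟩
    have h9 := csInf_le hSbdd hc1S
    have h10 : c1 < q' := lt_of_le_of_lt hc1m.2 hc2
    rw [← hq'def] at h9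
    linarith
  -- now T
  have hTne : ∃ c0 ∈ Set.Icc p q', φ c0 = B := by
    have h1 : B ∈ Set.Icc (φ q') (φ p) := ⟨by rw [hq'A]; linarith, hp⟩
    obtain ⟨c0, hc0, hc0B⟩ := intermediate_value_Icc' hq'Icc.1 hφ.continuousOn h1
    exact ⟨c0, hc0, hc0B⟩
  set T := {c | c ∈ Set.Icc p q' ∧ φ c = B} with hTdef
  have hTne' : T.Nonempty := by
    obtain ⟨c0, hc0, hc0B⟩ := hTne
    exact ⟨c0, hc0, hc0B⟩
  have hTclosed : IsClosed T := by
    have : T = Set.Icc p q' ∩ φ ⁻¹' {B} := by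
      ext c; simp [hTdef, Set.mem_inter_iff]
    rw [this]
    exact isClosed_Icc.inter (isClosed_singleton.preimage hφ)
  have hTbdd : BddAbove T := (bddAbove_Icc : BddAbove (Set.Icc p q')).mono (fun c hc => hc.1)
  set p' := sSup T with hp'def
  have hp'T : p' ∈ T := hTclosed.csSup_mem hTne' hTbdd
  have hp'Icc : p' ∈ Set.Icc p q' := hp'T.1
  have hp'B : φ p' = B := hp'T.2
  have hp'q' : p' < q' := by
    rcases lt_or_eq_of_le hp'Icc.2 with h | h
    · exact h
    · exfalso; rw [h, hq'A] at hp'B; linarith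
  have zp : ∀ c, p' < c → c ≤ q' → φ c < B := by
    intro c hc1 hc2
    by_contra hcon
    push_neg at hcon
    have h1 : B ∈ Set.Icc (φ q') (φ c) := ⟨by rw [hq'A]; linarith, hcon⟩
    obtain ⟨c2, hc2m, hc2B⟩ := intermediate_value_Icc' hc2 hφ.continuousOn h1
    have hc2T : c2 ∈ T := ⟨⟨by linarith [hc2m.1, hp'Icc.1], hc2m.2⟩, hc2B⟩
    have := le_csSup hTbdd hc2T
    linarith [hc2m.1]
  refine ⟨p', q', hp'Icc.1, hp'q', hq'Icc.2, hp'B, hq'A, ?_⟩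
  intro c hc
  constructor
  · rcases lt_or_eq_of_le hc.2 with h | h
    · exact (zq c (le_trans hp'Icc.1 hc.1) h).le
    · rw [h, hq'A]
  · rcases lt_or_eq_of_le hc.1 with h | h
    · exact (zp c h hc.2).le
    · rw [← h, hp'B]

lemma trim' (φ : ℝ → ℝ) (hφ : Continuous φ) {p q A B : ℝ} (hpq : p ≤ q) (hAB : A < B)
    (hp : φ p ≤ A) (hq : B ≤ φ q) :
    ∃ p' q', p ≤ p' ∧ p' < q' ∧ q' ≤ q ∧ φ p' = A ∧ φ q' = B ∧
      ∀ c ∈ Set.Icc p' q', A ≤ φ c ∧ φ c ≤ B := by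
  obtain ⟨p', q', h1, h2, h3, h4, h5, h6⟩ :=
    trim (fun c => -φ c) (hφ.neg) hpq (by linarith : -B < -A) (by simpa using hp) (by simpa using hq)
  refine ⟨p', q', h1, h2, h3, by linarith [h4], by linarith [h5], ?_⟩
  intro c hc
  obtain ⟨ha, hb⟩ := h6 c hc
  constructor <;> simp at ha hb <;> linarith


lemma cov1 (a u g : ℝ) (ha1 : 1.905 ≤ a) (ha2 : a ≤ 2)
    (hu : u = (a - 0.027225)^2 - a) (hg : g = u^2 - a) : 0.7 ≤ g := by
  have hu1 : 1.62 ≤ u := by rw [hu]; nlinarith [sq_nonneg (a - 1.905)]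
  have hu2 : u ≤ (a - 0.027225)^2 - a := le_of_eq hu
  rw [hg]
  nlinarith [sq_nonneg (a - 1.905), mul_nonneg (by linarith : (0:ℝ) ≤ a - 1.905) (by linarith : (0:ℝ) ≤ 2 - a), sq_nonneg (u - 1.62)]

lemma cov2 (a u g : ℝ) (ha1 : 1.905 ≤ a) (ha2 : a ≤ 2)
    (hu : u = (a - 0.49)^2 - a) (hg : g = u^2 - a) : g ≤ -0.7 := by
  have h1 : 0 ≤ u := by rw [hu]; nlinarith
  have h2 : u ≤ 0.2801 := by rw [hu]; nlinarith
  nlinarith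

lemma pw (a w : ℝ) (ha1 : 1.905 ≤ a) (ha2 : a ≤ 2) (hw : w^2 ≤ 0.49) :
    w^2 - a < 0 ∧ 0 < (w^2 - a)^2 - a := by
  constructor
  · nlinarith
  · nlinarith [sq_nonneg (w^2 - a + 1.415)]

lemma cov_hi (c : ℝ) (m : ℕ) (h1 : 1.905 ≤ -c) (h2 : -c ≤ 2)
    (hw : (H c m)^2 = 0.027225) : 0.7 ≤ H c (m+3) := by
  refine cov1 (-c) (H c (m+2)) (H c (m+3)) h1 h2 ?_ ?_
  · rw [show m+2 = (m+1)+1 from rfl, H_succ, H_succ, hw]; ring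
  · rw [show m+3 = (m+2)+1 from rfl, H_succ]; ring

lemma cov_lo (c : ℝ) (m : ℕ) (h1 : 1.905 ≤ -c) (h2 : -c ≤ 2)
    (hw : (H c m)^2 = 0.49) : H c (m+3) ≤ -0.7 := by
  refine cov2 (-c) (H c (m+2)) (H c (m+3)) h1 h2 ?_ ?_
  · rw [show m+2 = (m+1)+1 from rfl, H_succ, H_succ, hw]; ring
  · rw [show m+3 = (m+2)+1 from rfl, H_succ]; ring

lemma pw_all (c : ℝ) (m : ℕ) (h1 : 1.905 ≤ -c) (h2 : -c ≤ 2)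
    (hw : (H c m)^2 ≤ 0.49) : H c (m+1) < 0 ∧ 0 < H c (m+2) := by
  obtain ⟨r1, r2⟩ := pw (-c) (H c m) h1 h2 hw
  constructor
  · rw [H_succ]; linarith
  · rw [show m+2 = (m+1)+1 from rfl, H_succ, H_succ]
    calc (0:ℝ) < ((H c m)^2 - -c)^2 - -c := r2
    _ = ((H c m)^2 + c)^2 + c := by ring

/-- Stage-2 of the inductive step. -/
lemma step2 (m : ℕ) (ε : ℝ) (hε : ε = 1 ∨ ε = -1) (p₁ q₁ : ℝ) (hlt : p₁ ≤ q₁)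
    (hrange : ∀ c ∈ Set.Icc p₁ q₁, 1.905 ≤ -c ∧ -c ≤ 2)
    (hstrip : ∀ c ∈ Set.Icc p₁ q₁, 0.165 ≤ ε * H c m ∧ ε * H c m ≤ 0.7)
    (hends : (ε * H p₁ m = 0.165 ∧ ε * H q₁ m = 0.7) ∨ (ε * H p₁ m = 0.7 ∧ ε * H q₁ m = 0.165)) :
    ∃ p' q', p₁ ≤ p' ∧ p' < q' ∧ q' ≤ q₁ ∧
      (∀ c ∈ Set.Icc p' q',
        (ε = -1 → H c m < 0) ∧ (ε = 1 → 0 < H c m) ∧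
        H c (m+1) < 0 ∧ 0 < H c (m+2) ∧ |H c (m+3)| ≤ 0.7) ∧
      ((H p' (m+3) = 0.7 ∧ H q' (m+3) = -0.7) ∨ (H p' (m+3) = -0.7 ∧ H q' (m+3) = 0.7)) := by
  have hε2 : ε^2 = 1 := by rcases hε with h | h <;> rw [h] <;> norm_num
  have hwsq : ∀ c ∈ Set.Icc p₁ q₁, (H c m)^2 ≤ 0.49 := by
    intro c hc
    obtain ⟨l, r⟩ := hstrip c hc
    nlinarith [hε2]
  have hq1sq : ∀ e ∈ Set.Icc p₁ q₁, ε * H e m = 0.165 → (H e m)^2 = 0.027225 := by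
    intro e _ he
    nlinarith [hε2]
  have hq2sq : ∀ e ∈ Set.Icc p₁ q₁, ε * H e m = 0.7 → (H e m)^2 = 0.49 := by
    intro e _ he
    nlinarith [hε2]
  have main : ∀ p' q', p₁ ≤ p' → p' ≤ q' → q' ≤ q₁ →
      (∀ c ∈ Set.Icc p' q', -0.7 ≤ H c (m+3) ∧ H c (m+3) ≤ 0.7) →
      (∀ c ∈ Set.Icc p' q',
        (ε = -1 → H c m < 0) ∧ (ε = 1 → 0 < H c m) ∧
        H c (m+1) < 0 ∧ 0 < H c (m+2) ∧ |H c (m+3)| ≤ 0.7) := by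
    intro p' q' hp1 hpq' hq1 habs c hc
    have hcIcc : c ∈ Set.Icc p₁ q₁ := ⟨le_trans hp1 hc.1, le_trans hc.2 hq1⟩
    obtain ⟨hr1, hr2⟩ := hrange c hcIcc
    obtain ⟨hs1, hs2⟩ := hstrip c hcIcc
    obtain ⟨pw1, pw2⟩ := pw_all c m hr1 hr2 (hwsq c hcIcc)
    refine ⟨?_, ?_, pw1, pw2, ?_⟩
    · intro h; rw [h] at hs1; linarith
    · intro h; rw [h] at hs1; linarith
    · rw [abs_le]; exact habs c hc
  rcases hends with ⟨e1, e2⟩ | ⟨e1, e2⟩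
  · -- low end at p₁ : ψ(p₁) ≥ 0.7, ψ(q₁) ≤ -0.7
    have c1 : 0.7 ≤ H p₁ (m+3) :=
      cov_hi p₁ m (hrange p₁ (Set.left_mem_Icc.mpr hlt)).1 (hrange p₁ (Set.left_mem_Icc.mpr hlt)).2
        (hq1sq p₁ (Set.left_mem_Icc.mpr hlt) e1)
    have c2 : H q₁ (m+3) ≤ -0.7 :=
      cov_lo q₁ m (hrange q₁ (Set.right_mem_Icc.mpr hlt)).1 (hrange q₁ (Set.right_mem_Icc.mpr hlt)).2
        (hq2sq q₁ (Set.right_mem_Icc.mpr hlt) e2)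
    obtain ⟨p', q', h1, h2, h3, h4, h5, h6⟩ :=
      trim (fun c => H c (m+3)) (H_cont (m+3)) hlt (by norm_num : (-0.7:ℝ) < 0.7) c1 c2
    exact ⟨p', q', h1, h2, h3, main p' q' h1 h2.le h3 h6, Or.inl ⟨h4, h5⟩⟩
  · -- low end at q₁
    have c1 : H p₁ (m+3) ≤ -0.7 :=
      cov_lo p₁ m (hrange p₁ (Set.left_mem_Icc.mpr hlt)).1 (hrange p₁ (Set.left_mem_Icc.mpr hlt)).2
        (hq2sq p₁ (Set.left_mem_Icc.mpr hlt) e1)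
    have c2 : 0.7 ≤ H q₁ (m+3) :=
      cov_hi q₁ m (hrange q₁ (Set.right_mem_Icc.mpr hlt)).1 (hrange q₁ (Set.right_mem_Icc.mpr hlt)).2
        (hq1sq q₁ (Set.right_mem_Icc.mpr hlt) e2)
    obtain ⟨p', q', h1, h2, h3, h4, h5, h6⟩ :=
      trim' (fun c => H c (m+3)) (H_cont (m+3)) hlt (by norm_num : (-0.7:ℝ) < 0.7) c1 c2
    exact ⟨p', q', h1, h2, h3, main p' q' h1 h2.le h3 h6, Or.inr ⟨h4, h5⟩⟩

/-- Full inductive step. -/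
lemma stepx (m : ℕ) (t : Fin 2) (p q : ℝ) (hlt : p < q)
    (hrange : ∀ c ∈ Set.Icc p q, 1.905 ≤ -c ∧ -c ≤ 2)
    (hsmall : ∀ c ∈ Set.Icc p q, -0.7 ≤ H c m ∧ H c m ≤ 0.7)
    (hends : (H p m = 0.7 ∧ H q m = -0.7) ∨ (H p m = -0.7 ∧ H q m = 0.7)) :
    ∃ p' q', p ≤ p' ∧ p' < q' ∧ q' ≤ q ∧
      (∀ c ∈ Set.Icc p' q',
        (t = 0 → H c m < 0) ∧ (t = 1 → 0 < H c m) ∧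
        H c (m+1) < 0 ∧ 0 < H c (m+2) ∧ |H c (m+3)| ≤ 0.7) ∧
      ((H p' (m+3) = 0.7 ∧ H q' (m+3) = -0.7) ∨ (H p' (m+3) = -0.7 ∧ H q' (m+3) = 0.7)) := by
  have ht : t = 0 ∨ t = 1 := by omega
  have sub : ∀ p₁ q₁, p ≤ p₁ → q₁ ≤ q → ∀ c ∈ Set.Icc p₁ q₁, c ∈ Set.Icc p q :=
    fun p₁ q₁ h1 h2 c hc => ⟨le_trans h1 hc.1, le_trans hc.2 h2⟩
  rcases ht with ht | ht
  · -- t = 0 : strip [-0.7, -0.165], ε = -1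
    rcases hends with ⟨e1, e2⟩ | ⟨e1, e2⟩
    · -- φ p = 0.7, φ q = -0.7 : trim with B := -0.165, A := -0.7
      obtain ⟨p₁, q₁, h1, h2, h3, h4, h5, h6⟩ :=
        trim (fun c => H c m) (H_cont m) hlt.le (by norm_num : (-0.7:ℝ) < -0.165)
          (show (-0.165:ℝ) ≤ H p m by rw [e1]; norm_num) (show H q m ≤ (-0.7:ℝ) by rw [e2])
      obtain ⟨p', q', g1, g2, g3, g4, g5⟩ :=
        step2 m (-1) (Or.inr rfl) p₁ q₁ h2.le
          (fun c hc => hrange c (sub p₁ q₁ h1 h3 c hc))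
          (fun c hc => by
            have ha : (-0.7:ℝ) ≤ H c m := (h6 c hc).1
            have hb : H c m ≤ (-0.165:ℝ) := (h6 c hc).2
            constructor <;> linarith)
          (by
            have h4' : H p₁ m = -0.165 := h4
            have h5' : H q₁ m = -0.7 := h5
            exact Or.inl ⟨by rw [h4']; norm_num, by rw [h5']; norm_num⟩)
      refine ⟨p', q', le_trans h1 g1, g2, le_trans g3 h3, ?_, g5⟩
      intro c hc
      obtain ⟨m1, m2, m3, m4, m5⟩ := g4 c hc
      exact ⟨fun _ => m1 rfl, fun hh => by rw [ht] at hh; exact absurd hh (by decide), m3, m4, m5⟩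
    · obtain ⟨p₁, q₁, h1, h2, h3, h4, h5, h6⟩ :=
        trim' (fun c => H c m) (H_cont m) hlt.le (by norm_num : (-0.7:ℝ) < -0.165)
          (show H p m ≤ (-0.7:ℝ) by rw [e1]) (show (-0.165:ℝ) ≤ H q m by rw [e2]; norm_num)
      obtain ⟨p', q', g1, g2, g3, g4, g5⟩ :=
        step2 m (-1) (Or.inr rfl) p₁ q₁ h2.le
          (fun c hc => hrange c (sub p₁ q₁ h1 h3 c hc))
          (fun c hc => by
            have ha : (-0.7:ℝ) ≤ H c m := (h6 c hc).1
            have hb : H c m ≤ (-0.165:ℝ) := (h6 c hc).2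
            constructor <;> linarith)
          (by
            have h4' : H p₁ m = -0.7 := h4
            have h5' : H q₁ m = -0.165 := h5
            exact Or.inr ⟨by rw [h4']; norm_num, by rw [h5']; norm_num⟩)
      refine ⟨p', q', le_trans h1 g1, g2, le_trans g3 h3, ?_, g5⟩
      intro c hc
      obtain ⟨m1, m2, m3, m4, m5⟩ := g4 c hc
      exact ⟨fun _ => m1 rfl, fun hh => by rw [ht] at hh; exact absurd hh (by decide), m3, m4, m5⟩
  · -- t = 1 : strip [0.165, 0.7], ε = 1
    rcases hends with ⟨e1, e2⟩ | ⟨e1, e2⟩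
    · obtain ⟨p₁, q₁, h1, h2, h3, h4, h5, h6⟩ :=
        trim (fun c => H c m) (H_cont m) hlt.le (by norm_num : (0.165:ℝ) < 0.7)
          (show (0.7:ℝ) ≤ H p m by rw [e1]) (show H q m ≤ (0.165:ℝ) by rw [e2]; norm_num)
      obtain ⟨p', q', g1, g2, g3, g4, g5⟩ :=
        step2 m 1 (Or.inl rfl) p₁ q₁ h2.le
          (fun c hc => hrange c (sub p₁ q₁ h1 h3 c hc))
          (fun c hc => by
            have ha : (0.165:ℝ) ≤ H c m := (h6 c hc).1
            have hb : H c m ≤ (0.7:ℝ) := (h6 c hc).2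
            constructor <;> linarith)
          (by
            have h4' : H p₁ m = 0.7 := h4
            have h5' : H q₁ m = 0.165 := h5
            exact Or.inr ⟨by rw [h4']; norm_num, by rw [h5']; norm_num⟩)
      refine ⟨p', q', le_trans h1 g1, g2, le_trans g3 h3, ?_, g5⟩
      intro c hc
      obtain ⟨m1, m2, m3, m4, m5⟩ := g4 c hc
      exact ⟨fun hh => by rw [ht] at hh; exact absurd hh (by decide), fun _ => m2 rfl, m3, m4, m5⟩
    · obtain ⟨p₁, q₁, h1, h2, h3, h4, h5, h6⟩ :=
        trim' (fun c => H c m) (H_cont m) hlt.le (by norm_num : (0.165:ℝ) < 0.7)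
          (show H p m ≤ (0.165:ℝ) by rw [e1]; norm_num) (show (0.7:ℝ) ≤ H q m by rw [e2])
      obtain ⟨p', q', g1, g2, g3, g4, g5⟩ :=
        step2 m 1 (Or.inl rfl) p₁ q₁ h2.le
          (fun c hc => hrange c (sub p₁ q₁ h1 h3 c hc))
          (fun c hc => by
            have ha : (0.165:ℝ) ≤ H c m := (h6 c hc).1
            have hb : H c m ≤ (0.7:ℝ) := (h6 c hc).2
            constructor <;> linarith)
          (by
            have h4' : H p₁ m = 0.165 := h4
            have h5' : H q₁ m = 0.7 := h5
            exact Or.inl ⟨by rw [h4']; norm_num, by rw [h5']; norm_num⟩)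
      refine ⟨p', q', le_trans h1 g1, g2, le_trans g3 h3, ?_, g5⟩
      intro c hc
      obtain ⟨m1, m2, m3, m4, m5⟩ := g4 c hc
      exact ⟨fun hh => by rw [ht] at hh; exact absurd hh (by decide), fun _ => m2 rfl, m3, m4, m5⟩

lemma H_one (c : ℝ) : H c 1 = c^2 + c := by
  rw [show (1:ℕ) = 0+1 from rfl, H_succ, H_zero]

/-- Base interval for n = 3. -/
lemma base3 : ∃ p q : ℝ, p < q ∧
    (∀ c ∈ Set.Icc p q, 1.905 ≤ -c ∧ -c ≤ 2) ∧
    (∀ c ∈ Set.Icc p q, ∀ j, 1 ≤ j → j ≤ 2 → 0 < H c j) ∧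
    (∀ c ∈ Set.Icc p q, -0.7 ≤ H c 3 ∧ H c 3 ≤ 0.7) ∧
    ((H p 3 = 0.7 ∧ H q 3 = -0.7) ∨ (H p 3 = -0.7 ∧ H q 3 = 0.7)) := by
  have e2 : ∀ c : ℝ, H c 2 = (c^2+c)^2 + c := by
    intro c; rw [show (2:ℕ) = 1+1 from rfl, H_succ, H_one]
  have e3 : ∀ c : ℝ, H c 3 = (H c 2)^2 + c := by
    intro c; rw [show (3:ℕ) = 2+1 from rfl, H_succ]
  -- stage 1 : trim H·2 to [1.09, 1.65] on [-1.97, -1.907]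
  obtain ⟨p₁, q₁, h1, h2, h3, h4, h5, h6⟩ :=
    trim (fun c => H c 2) (H_cont 2) (by norm_num : (-1.97:ℝ) ≤ -1.907)
      (by norm_num : (1.09:ℝ) < 1.65)
      (show (1.65:ℝ) ≤ H (-1.97) 2 by rw [e2]; norm_num)
      (show H (-1.907) 2 ≤ (1.09:ℝ) by rw [e2]; norm_num)
  have h4' : H p₁ 2 = 1.65 := h4
  have h5' : H q₁ 2 = 1.09 := h5
  have hsub : ∀ c ∈ Set.Icc p₁ q₁, c ∈ Set.Icc (-1.97:ℝ) (-1.907) :=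
    fun c hc => ⟨le_trans h1 hc.1, le_trans hc.2 h3⟩
  -- stage 2 : trim H·3 to [-0.7, 0.7]
  obtain ⟨p', q', g1, g2, g3, g4, g5, g6⟩ :=
    trim (fun c => H c 3) (H_cont 3) h2.le (by norm_num : (-0.7:ℝ) < 0.7)
      (by
        show (0.7:ℝ) ≤ H p₁ 3
        rw [e3, h4']
        have := (hsub p₁ (Set.left_mem_Icc.mpr h2.le)).1
        norm_num; linarith)
      (by
        show H q₁ 3 ≤ -(0.7:ℝ)
        rw [e3, h5']
        have := (hsub q₁ (Set.right_mem_Icc.mpr h2.le)).2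
        norm_num; linarith)
  have hsub' : ∀ c ∈ Set.Icc p' q', c ∈ Set.Icc p₁ q₁ :=
    fun c hc => ⟨le_trans g1 hc.1, le_trans hc.2 g3⟩
  refine ⟨p', q', g2, ?_, ?_, ?_, Or.inl ⟨g4, g5⟩⟩
  · intro c hc
    have hc' := hsub c (hsub' c hc)
    obtain ⟨l, r⟩ := hc'
    constructor <;> norm_num <;> linarith
  · intro c hc j hj1 hj2
    have hc2 := h6 c (hsub' c hc)
    have hcr := hsub c (hsub' c hc)
    interval_cases j
    · rw [H_one]; nlinarith [hcr.1, hcr.2]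
    · have : (1.09:ℝ) ≤ H c 2 := hc2.1
      linarith
  · intro c hc
    exact ⟨(g6 c hc).1, (g6 c hc).2⟩

/-- Stretch construction for n ≥ 4. -/
lemma stretch (j : ℕ) (hj : 1 ≤ j) : ∃ p q : ℝ, p < q ∧
    Set.Icc p q ⊆ Set.Icc (-2 : ℝ) (-1.963) ∧
    (∀ c ∈ Set.Icc p q, ∀ i, 1 ≤ i → i ≤ j → 1.9 ≤ H c i ∧ H c i ≤ 2) ∧
    H p j = 2 ∧ H q j = 1.9 := by
  induction j with
  | zero => omega
  | succ j ih =>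
    rcases Nat.eq_or_lt_of_le hj with h0 | h0
    · -- j+1 = 1 : base case
      obtain ⟨p, q, h1, h2, h3, h4, h5, h6⟩ :=
        trim (fun c => H c 1) (H_cont 1) (by norm_num : (-2:ℝ) ≤ -1.963)
          (by norm_num : (1.9:ℝ) < 2)
          (show (2:ℝ) ≤ H (-2) 1 by rw [H_one]; norm_num)
          (show H (-1.963) 1 ≤ (1.9:ℝ) by rw [H_one]; norm_num)
      refine ⟨p, q, h2, fun c hc => ⟨le_trans h1 hc.1, le_trans hc.2 h3⟩, ?_, ?_, ?_⟩
      · intro c hc i hi1 hi2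
        have : i = 1 := by omega
        subst this
        exact ⟨(h6 c hc).1, (h6 c hc).2⟩
      · rw [show j+1 = 1 from h0.symm]; exact h4
      · rw [show j+1 = 1 from h0.symm]; exact h5
    · -- inductive step : j ≥ 1
      obtain ⟨p, q, h1, h2, h3, h4, h5⟩ := ih (by omega)
      have hpm : p ∈ Set.Icc (-2:ℝ) (-1.963) := h2 (Set.left_mem_Icc.mpr h1.le)
      have hqm : q ∈ Set.Icc (-2:ℝ) (-1.963) := h2 (Set.right_mem_Icc.mpr h1.le)
      obtain ⟨p', q', g1, g2, g3, g4, g5, g6⟩ :=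
        trim (fun c => H c (j+1)) (H_cont (j+1)) h1.le (by norm_num : (1.9:ℝ) < 2)
          (by
            show (2:ℝ) ≤ H p (j+1)
            rw [H_succ, h4]
            have := hpm.1
            norm_num; linarith)
          (by
            show H q (j+1) ≤ (1.9:ℝ)
            rw [H_succ, h5]
            have := hqm.2
            norm_num; linarith)
      have hsub : ∀ c ∈ Set.Icc p' q', c ∈ Set.Icc p q :=
        fun c hc => ⟨le_trans g1 hc.1, le_trans hc.2 g3⟩
      refine ⟨p', q', g2, fun c hc => h2 (hsub c hc), ?_, g4, g5⟩
      intro c hc i hi1 hi2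
      rcases Nat.lt_or_ge i (j+1) with hlt | hge
      · exact h3 c (hsub c hc) i hi1 (by omega)
      · have : i = j+1 := by omega
        subst this
        exact ⟨(g6 c hc).1, (g6 c hc).2⟩

/-- Base interval for n ≥ 4. -/
lemma base4 (n : ℕ) (hn : 4 ≤ n) : ∃ p q : ℝ, p < q ∧
    (∀ c ∈ Set.Icc p q, 1.905 ≤ -c ∧ -c ≤ 2) ∧
    (∀ c ∈ Set.Icc p q, ∀ j, 1 ≤ j → j ≤ n-1 → 0 < H c j) ∧
    (∀ c ∈ Set.Icc p q, -0.7 ≤ H c n ∧ H c n ≤ 0.7) ∧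
    ((H p n = 0.7 ∧ H q n = -0.7) ∨ (H p n = -0.7 ∧ H q n = 0.7)) := by
  obtain ⟨p, q, h1, h2, h3, h4, h5⟩ := stretch (n-3) (by omega)
  have hpm : p ∈ Set.Icc (-2:ℝ) (-1.963) := h2 (Set.left_mem_Icc.mpr h1.le)
  have hqm : q ∈ Set.Icc (-2:ℝ) (-1.963) := h2 (Set.right_mem_Icc.mpr h1.le)
  have en2 : n-2 = (n-3)+1 := by omega
  have en1 : n-1 = (n-2)+1 := by omega
  have en0 : n = (n-1)+1 := by omega
  -- transition 1 : strip [1.74, 1.95] for H·(n-2)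
  obtain ⟨p₂, q₂, f1, f2, f3, f4, f5, f6⟩ :=
    trim (fun c => H c (n-2)) (H_cont (n-2)) h1.le (by norm_num : (1.74:ℝ) < 1.95)
      (by
        show (1.95:ℝ) ≤ H p (n-2)
        rw [en2, H_succ, h4]
        have := hpm.1
        norm_num; linarith)
      (by
        show H q (n-2) ≤ (1.74:ℝ)
        rw [en2, H_succ, h5]
        have := hqm.2
        norm_num; linarith)
  have f4' : H p₂ (n-2) = 1.95 := f4
  have f5' : H q₂ (n-2) = 1.74 := f5
  have hsub2 : ∀ c ∈ Set.Icc p₂ q₂, c ∈ Set.Icc p q :=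
    fun c hc => ⟨le_trans f1 hc.1, le_trans hc.2 f3⟩
  have hp2m : p₂ ∈ Set.Icc (-2:ℝ) (-1.963) := h2 (hsub2 p₂ (Set.left_mem_Icc.mpr f2.le))
  have hq2m : q₂ ∈ Set.Icc (-2:ℝ) (-1.963) := h2 (hsub2 q₂ (Set.right_mem_Icc.mpr f2.le))
  -- transition 2 : strip [1.09, 1.65] for H·(n-1)
  obtain ⟨p₃, q₃, k1, k2, k3, k4, k5, k6⟩ :=
    trim (fun c => H c (n-1)) (H_cont (n-1)) f2.le (by norm_num : (1.09:ℝ) < 1.65)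
      (by
        show (1.65:ℝ) ≤ H p₂ (n-1)
        rw [en1, H_succ, f4']
        have := hp2m.1
        norm_num; linarith)
      (by
        show H q₂ (n-1) ≤ (1.09:ℝ)
        rw [en1, H_succ, f5']
        have := hq2m.2
        norm_num; linarith)
  have k4' : H p₃ (n-1) = 1.65 := k4
  have k5' : H q₃ (n-1) = 1.09 := k5
  have hsub3 : ∀ c ∈ Set.Icc p₃ q₃, c ∈ Set.Icc p₂ q₂ :=
    fun c hc => ⟨le_trans k1 hc.1, le_trans hc.2 k3⟩
  have hp3m : p₃ ∈ Set.Icc (-2:ℝ) (-1.963) := h2 (hsub2 _ (hsub3 p₃ (Set.left_mem_Icc.mpr k2.le)))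
  have hq3m : q₃ ∈ Set.Icc (-2:ℝ) (-1.963) := h2 (hsub2 _ (hsub3 q₃ (Set.right_mem_Icc.mpr k2.le)))
  -- final : [-0.7, 0.7] for H·n
  obtain ⟨p', q', g1, g2, g3, g4, g5, g6⟩ :=
    trim (fun c => H c n) (H_cont n) k2.le (by norm_num : (-0.7:ℝ) < 0.7)
      (by
        show (0.7:ℝ) ≤ H p₃ n
        rw [en0, H_succ, k4']
        have := hp3m.1
        norm_num; linarith)
      (by
        show H q₃ n ≤ -(0.7:ℝ)
        rw [en0, H_succ, k5']
        have := hq3m.2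
        norm_num; linarith)
  have hsub4 : ∀ c ∈ Set.Icc p' q', c ∈ Set.Icc p₃ q₃ :=
    fun c hc => ⟨le_trans g1 hc.1, le_trans hc.2 g3⟩
  refine ⟨p', q', g2, ?_, ?_, ?_, Or.inl ⟨g4, g5⟩⟩
  · intro c hc
    have hcm := h2 (hsub2 _ (hsub3 _ (hsub4 c hc)))
    obtain ⟨l, r⟩ := hcm
    constructor <;> norm_num <;> linarith
  · intro c hc j hj1 hj2
    rcases Nat.lt_or_ge j (n-2) with hlt | hge
    · have := h3 c (hsub2 _ (hsub3 _ (hsub4 c hc))) j hj1 (by omega)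
      linarith [this.1]
    · rcases Nat.lt_or_ge j (n-1) with hlt2 | hge2
      · have : j = n-2 := by omega
        subst this
        have := (f6 c (hsub3 _ (hsub4 c hc))).1
        linarith
      · have : j = n-1 := by omega
        subst this
        have := (k6 c (hsub4 c hc)).1
        linarith
  · intro c hc
    exact ⟨(g6 c hc).1, (g6 c hc).2⟩

section main
variable (n : ℕ) (x : ℕ → Fin 2)

def KInv (k : ℕ) (pq : ℝ × ℝ) : Prop := pq.1 < pq.2 ∧
  (∀ c ∈ Set.Icc pq.1 pq.2, (1.905 ≤ -c ∧ -c ≤ 2) ∧ (∀ j, 1 ≤ j → j ≤ n-1 → 0 < H c j) ∧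
    (∀ i, i < k → ((x i = 0 → H c (n+3*i) < 0) ∧ (x i = 1 → 0 < H c (n+3*i)) ∧
      H c (n+3*i+1) < 0 ∧ 0 < H c (n+3*i+2))) ∧
    (-0.7 ≤ H c (n+3*k) ∧ H c (n+3*k) ≤ 0.7)) ∧
  ((H pq.1 (n+3*k) = 0.7 ∧ H pq.2 (n+3*k) = -0.7) ∨ (H pq.1 (n+3*k) = -0.7 ∧ H pq.2 (n+3*k) = 0.7))

lemma KInv_zero (hn : 3 ≤ n) : ∃ pq : ℝ × ℝ, KInv n x 0 pq := by
  rcases Nat.eq_or_lt_of_le hn with h3 | h4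
  · subst h3
    obtain ⟨p, q, h1, h2, h3', h4', h5⟩ := base3
    exact ⟨(p, q), h1,
      fun c hc => ⟨h2 c hc, fun j hj1 hj2 => h3' c hc j hj1 (by omega),
        fun i hi => absurd hi (Nat.not_lt_zero i), h4' c hc⟩, h5⟩
  · obtain ⟨p, q, h1, h2, h3', h4', h5⟩ := base4 n (by omega)
    exact ⟨(p, q), h1,
      fun c hc => ⟨h2 c hc, h3' c hc,
        fun i hi => absurd hi (Nat.not_lt_zero i), h4' c hc⟩, h5⟩

lemma KInv_step (k : ℕ) (pq : ℝ × ℝ) (hI : KInv n x k pq) :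
    ∃ pq' : ℝ × ℝ, (pq.1 ≤ pq'.1 ∧ pq'.2 ≤ pq.2) ∧ KInv n x (k+1) pq' := by
  obtain ⟨hlt, hpt, hends⟩ := hI
  obtain ⟨p', q', g1, g2, g3, g4, g5⟩ :=
    stepx (n+3*k) (x k) pq.1 pq.2 hlt (fun c hc => (hpt c hc).1)
      (fun c hc => (hpt c hc).2.2.2) hends
  have e : n + 3*(k+1) = (n+3*k)+3 := by ring
  refine ⟨(p', q'), ⟨g1, g3⟩, g2, ?_, ?_⟩
  · intro c hc
    have hcold : c ∈ Set.Icc pq.1 pq.2 := ⟨le_trans g1 hc.1, le_trans hc.2 g3⟩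
    obtain ⟨hr, hpos, hblocks, _⟩ := hpt c hcold
    obtain ⟨m1, m2, m3, m4, m5⟩ := g4 c hc
    refine ⟨hr, hpos, ?_, ?_⟩
    · intro i hi
      rcases Nat.lt_or_ge i k with hik | hik
      · exact hblocks i hik
      · have : i = k := by omega
        subst this
        exact ⟨m1, m2, m3, m4⟩
    · rw [e]
      exact abs_le.mp m5
  · rw [e]
    exact g5

noncomputable def chainF (hn : 3 ≤ n) : (k : ℕ) → {pq : ℝ × ℝ // KInv n x k pq}
  | 0 => ⟨(KInv_zero n x hn).choose, (KInv_zero n x hn).choose_spec⟩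
  | (k+1) => ⟨(KInv_step n x k (chainF hn k).1 (chainF hn k).2).choose,
      (KInv_step n x k (chainF hn k).1 (chainF hn k).2).choose_spec.2⟩

lemma chain_sub (hn : 3 ≤ n) (k : ℕ) :
    (chainF n x hn k).1.1 ≤ (chainF n x hn (k+1)).1.1 ∧
    (chainF n x hn (k+1)).1.2 ≤ (chainF n x hn k).1.2 := by
  have h := (KInv_step n x k (chainF n x hn k).1 (chainF n x hn k).2).choose_spec.1
  exact h

theorem stmt_3 (n : ℕ) (hn : 3 ≤ n) (x : ℕ → Fin 2) :
    ∃! c : ℝ, c ∈ Kset n ∧ ∀ k : ℕ,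
      (x k = 0 → (fc c)^[n + 3 * k] c < 0) ∧ (x k = 1 → 0 < (fc c)^[n + 3 * k] c) := by
  classical
  set p : ℕ → ℝ := fun k => (chainF n x hn k).1.1 with hp
  set q : ℕ → ℝ := fun k => (chainF n x hn k).1.2 with hq
  have hpq : ∀ k, p k < q k := fun k => (chainF n x hn k).2.1
  have hpmono : Monotone p := monotone_nat_of_le_succ (fun k => (chain_sub n x hn k).1)
  have hqanti : Antitone q := antitone_nat_of_succ_le (fun k => (chain_sub n x hn k).2)
  have hcross : ∀ j k, p j ≤ q k := by
    intro j k
    rcases le_total j k with h | h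
    · exact le_trans (hpmono h) (hpq k).le
    · exact le_trans (hpq j).le (hqanti h)
  have hbdd : BddAbove (Set.range p) := ⟨q 0, fun y ⟨j, hj⟩ => hj ▸ hcross j 0⟩
  set c : ℝ := sSup (Set.range p) with hc
  have hc1 : ∀ k, p k ≤ c := fun k => le_csSup hbdd ⟨k, rfl⟩
  have hc2 : ∀ k, c ≤ q k := fun k => csSup_le (Set.range_nonempty p) (fun y ⟨j, hj⟩ => hj ▸ hcross j k)
  have hmem : ∀ k, c ∈ Set.Icc (p k) (q k) := fun k => ⟨hc1 k, hc2 k⟩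
  have hpt : ∀ k, (1.905 ≤ -c ∧ -c ≤ 2) ∧ (∀ j, 1 ≤ j → j ≤ n-1 → 0 < H c j) ∧
      (∀ i, i < k → ((x i = 0 → H c (n+3*i) < 0) ∧ (x i = 1 → 0 < H c (n+3*i)) ∧
        H c (n+3*i+1) < 0 ∧ 0 < H c (n+3*i+2))) ∧
      (-0.7 ≤ H c (n+3*k) ∧ H c (n+3*k) ≤ 0.7) :=
    fun k => (chainF n x hn k).2.2.1 c (hmem k)
  have hKmem : c ∈ Kset n := by
    refine ⟨by linarith [(hpt 0).1.1], fun j hj1 hj2 => (hpt 0).2.1 j hj1 hj2, fun k => ?_⟩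
    have h := (hpt (k+1)).2.2.1 k (Nat.lt_succ_self k)
    exact ⟨h.2.2.1, h.2.2.2⟩
  have hsigns : ∀ k, (x k = 0 → H c (n+3*k) < 0) ∧ (x k = 1 → 0 < H c (n+3*k)) := by
    intro k
    have h := (hpt (k+1)).2.2.1 k (Nat.lt_succ_self k)
    exact ⟨h.1, h.2.1⟩
  refine ⟨c, ⟨hKmem, hsigns⟩, ?_⟩
  intro c' ⟨hK', hs'⟩
  have F := Kset_facts n hn c hKmem
  have F' := Kset_facts n hn c' hK'
  rcases le_total c' c with h | h
  · exact Kset_uniq_aux n x c' c hn F' F hs' hsigns h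
  · exact (Kset_uniq_aux n x c c' hn F F' hsigns hs' h).symm
end main
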